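/- Let δ ∈ [1,2), d ≥ 1, and define V : ℝ^d → ℝ by V(x) = -(1+‖x‖²)^{δ/2}. Then for every x ∈ ℝ^d and every z ∈ ℝ^d, the second derivative of V at x evaluated at the pair (z,z) satisfies D²V(x)[z,z] ≤ -δ(1+‖x‖²)^{δ/2-2}‖z‖²; in particular D²V(x)[z,z] < 0 whenever z ≠ 0, so V is strictly concave. -/

import Mathlib

open Real

set_option maxHeartbeats 1000000

section aux

open RealInnerProductSpace

variable {E : Type*} [NormedAddCommGroup E] [InnerProductSpace ℝ E]

lemma aux_hasFDerivAt_A (x : E) :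
    HasFDerivAt (fun y : E => 1 + ‖y‖ ^ 2) ((2 : ℝ) • innerSL ℝ x) x := by
  have h := ((hasFDerivAt_id x).inner ℝ (hasFDerivAt_id x)).const_add 1
  have he : (fun y : E => 1 + ‖y‖ ^ 2) = fun y : E => 1 + ⟪y, y⟫ := by
    funext y; rw [real_inner_self_eq_norm_sq]
  rw [he]
  refine h.congr_fderiv ?_
  ext z
  simp [fderivInnerCLM_apply, real_inner_comm, two_mul, innerSL_apply_apply]

lemma aux_hasFDerivAt_c (δ : ℝ) (x : E) :
    HasFDerivAt (fun y : E => -δ * (1 + ‖y‖ ^ 2) ^ (δ / 2 - 1))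
      ((-δ * (δ - 2) * (1 + ‖x‖ ^ 2) ^ (δ / 2 - 2)) • innerSL ℝ x) x := by
  have hA : (0 : ℝ) < 1 + ‖x‖ ^ 2 := by positivity
  have h2 : HasDerivAt (fun t : ℝ => t ^ (δ / 2 - 1))
      ((δ / 2 - 1) * (1 + ‖x‖ ^ 2) ^ (δ / 2 - 1 - 1)) (1 + ‖x‖ ^ 2) :=
    Real.hasDerivAt_rpow_const (Or.inl hA.ne')
  have h3 := (h2.comp_hasFDerivAt x (aux_hasFDerivAt_A x)).const_mul (-δ)
  refine h3.congr_fderiv ?_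
  ext z
  have h4 : δ / 2 - 1 - 1 = δ / 2 - 2 := by ring
  simp only [h4, ContinuousLinearMap.smul_apply, innerSL_apply_apply, smul_eq_mul]
  ring

lemma aux_hasFDerivAt_V (δ : ℝ) (x : E) :
    HasFDerivAt (fun y : E => -((1 + ‖y‖ ^ 2) ^ (δ / 2)))
      ((-δ * (1 + ‖x‖ ^ 2) ^ (δ / 2 - 1)) • innerSL ℝ x) x := by
  have hA : (0 : ℝ) < 1 + ‖x‖ ^ 2 := by positivity
  have h2 : HasDerivAt (fun t : ℝ => t ^ (δ / 2))
      ((δ / 2) * (1 + ‖x‖ ^ 2) ^ (δ / 2 - 1)) (1 + ‖x‖ ^ 2) :=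
    Real.hasDerivAt_rpow_const (Or.inl hA.ne')
  have h3 := (h2.comp_hasFDerivAt x (aux_hasFDerivAt_A x)).neg
  refine h3.congr_fderiv ?_
  ext z
  simp only [ContinuousLinearMap.neg_apply, ContinuousLinearMap.smul_apply, innerSL_apply_apply,
    smul_eq_mul]
  ring

end aux

theorem stmt_19 (δ : ℝ) (hδ1 : 1 ≤ δ) (hδ2 : δ < 2) (d : ℕ) (hd : 1 ≤ d)
    (V : EuclideanSpace ℝ (Fin d) → ℝ)
    (hV : ∀ x : EuclideanSpace ℝ (Fin d), V x = -(1 + ‖x‖ ^ 2) ^ (δ / 2)) :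
    (∀ x z : EuclideanSpace ℝ (Fin d),
      (iteratedFDeriv ℝ 2 V x) ![z, z] ≤ -δ * (1 + ‖x‖ ^ 2) ^ (δ / 2 - 2) * ‖z‖ ^ 2) ∧
    (∀ x z : EuclideanSpace ℝ (Fin d), z ≠ 0 → (iteratedFDeriv ℝ 2 V x) ![z, z] < 0) ∧
    StrictConcaveOn ℝ Set.univ V := by
  have hδ0 : (0 : ℝ) < δ := lt_of_lt_of_le one_pos hδ1
  have hVe : V = fun y : EuclideanSpace ℝ (Fin d) => -((1 + ‖y‖ ^ 2) ^ (δ / 2)) := by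
    funext y; exact hV y
  -- second derivative computation
  have hsecond : ∀ x z : EuclideanSpace ℝ (Fin d), (iteratedFDeriv ℝ 2 V x) ![z, z] =
      -δ * (1 + ‖x‖ ^ 2) ^ (δ / 2 - 1) * (inner ℝ z z : ℝ)
        + (-δ * (δ - 2) * (1 + ‖x‖ ^ 2) ^ (δ / 2 - 2)) * (inner ℝ x z : ℝ) * (inner ℝ x z : ℝ) := by
    intro x z
    have hCD : ContDiffAt ℝ 2 V x := by
      rw [hVe]
      have h1 : ContDiffAt ℝ 2 (fun w : EuclideanSpace ℝ (Fin d) => 1 + ‖w‖ ^ 2) x :=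
        (contDiff_const.add (contDiff_norm_sq ℝ)).contDiffAt
      exact (h1.rpow_const_of_ne (by positivity)).neg
    have hdF : DifferentiableAt ℝ (fderiv ℝ V) x :=
      (hCD.fderiv_right (m := 1) (by norm_num)).differentiableAt one_ne_zero
    rw [iteratedFDeriv_two_apply]
    simp only [Matrix.cons_val_zero, Matrix.cons_val_one, Matrix.head_cons]
    have happ : fderiv ℝ (fderiv ℝ V) x z z = fderiv ℝ (fun y => fderiv ℝ V y z) x z := by
      rw [fderiv_clm_apply hdF (differentiableAt_const z)]
      simp
    rw [happ]
    have hfun : (fun y : EuclideanSpace ℝ (Fin d) => fderiv ℝ V y z)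
        = fun y => (-δ * (1 + ‖y‖ ^ 2) ^ (δ / 2 - 1)) * (inner ℝ y z : ℝ) := by
      funext y
      rw [hVe, (aux_hasFDerivAt_V δ y).fderiv]
      simp only [ContinuousLinearMap.smul_apply, innerSL_apply_apply, smul_eq_mul]
    rw [hfun]
    have hg : HasFDerivAt (fun y : EuclideanSpace ℝ (Fin d) => (inner ℝ y z : ℝ))
        (innerSL ℝ z) x := by
      have he : (fun y : EuclideanSpace ℝ (Fin d) => (inner ℝ y z : ℝ))
          = fun y => (inner ℝ z y : ℝ) := funext fun y => real_inner_comm z y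
      rw [he]
      exact (innerSL ℝ z).hasFDerivAt
    have hmul := (aux_hasFDerivAt_c δ x).mul hg
    have hmul' : HasFDerivAt (fun y : EuclideanSpace ℝ (Fin d) =>
        (-δ * (1 + ‖y‖ ^ 2) ^ (δ / 2 - 1)) * (inner ℝ y z : ℝ)) _ x := hmul
    rw [hmul'.fderiv]
    simp only [ContinuousLinearMap.add_apply, ContinuousLinearMap.smul_apply, innerSL_apply_apply,
      smul_eq_mul]
    ring
  have hA : ∀ x : EuclideanSpace ℝ (Fin d), (0 : ℝ) < 1 + ‖x‖ ^ 2 := fun x => by positivity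
  have part1 : ∀ x z : EuclideanSpace ℝ (Fin d),
      (iteratedFDeriv ℝ 2 V x) ![z, z] ≤ -δ * (1 + ‖x‖ ^ 2) ^ (δ / 2 - 2) * ‖z‖ ^ 2 := by
    intro x z
    rw [hsecond x z]
    set A : ℝ := 1 + ‖x‖ ^ 2 with hAdef
    have hA0 : (0 : ℝ) < A := hA x
    have hB : (0 : ℝ) < A ^ (δ / 2 - 2) := Real.rpow_pos_of_pos hA0 _
    have hAB : A ^ (δ / 2 - 1) = A ^ (δ / 2 - 2) * A := by
      rw [show δ / 2 - 1 = δ / 2 - 2 + 1 by ring, Real.rpow_add_one hA0.ne']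
    have hzz : (inner ℝ z z : ℝ) = ‖z‖ ^ 2 := real_inner_self_eq_norm_sq z
    have hcs : (inner ℝ x z : ℝ) * (inner ℝ x z : ℝ) ≤ (inner ℝ x x : ℝ) * (inner ℝ z z : ℝ) :=
      real_inner_mul_inner_self_le x z
    have hxx : (inner ℝ x x : ℝ) = ‖x‖ ^ 2 := real_inner_self_eq_norm_sq x
    rw [hAB, hzz]
    set p : ℝ := (inner ℝ x z : ℝ)
    rw [hzz, hxx] at hcs
    have key : ‖z‖ ^ 2 ≤ (δ - 2) * (p * p) + A * ‖z‖ ^ 2 := by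
      have h1 : -(p * p) ≥ -(‖x‖ ^ 2 * ‖z‖ ^ 2) := by linarith
      nlinarith [sq_nonneg p]
    have hmul := mul_le_mul_of_nonneg_left key
      (show (0 : ℝ) ≤ δ * A ^ (δ / 2 - 2) by positivity)
    nlinarith [hmul]
  refine ⟨part1, ?_, ?_⟩
  · intro x z hz
    have h1 := part1 x z
    have hB : (0 : ℝ) < (1 + ‖x‖ ^ 2) ^ (δ / 2 - 2) := Real.rpow_pos_of_pos (hA x) _
    have hz2 : (0 : ℝ) < ‖z‖ ^ 2 := by
      have := norm_pos_iff.mpr hz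
      positivity
    nlinarith [mul_pos (mul_pos hδ0 hB) hz2]
  · refine ⟨convex_univ, ?_⟩
    intro x _ y _ hxy a b ha hb hab
    have hAx : (0 : ℝ) < 1 + ‖x‖ ^ 2 := hA x
    have hAy : (0 : ℝ) < 1 + ‖y‖ ^ 2 := hA y
    set w : EuclideanSpace ℝ (Fin d) := a • x + b • y
    have hAw : (0 : ℝ) < 1 + ‖w‖ ^ 2 := hA w
    set sx : ℝ := Real.sqrt (1 + ‖x‖ ^ 2)
    set sy : ℝ := Real.sqrt (1 + ‖y‖ ^ 2)
    have hsx : 0 < sx := Real.sqrt_pos.mpr hAx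
    have hsy : 0 < sy := Real.sqrt_pos.mpr hAy
    have hsx2 : sx ^ 2 = 1 + ‖x‖ ^ 2 := Real.sq_sqrt hAx.le
    have hsy2 : sy ^ 2 = 1 + ‖y‖ ^ 2 := Real.sq_sqrt hAy.le
    have hp : (inner ℝ x y : ℝ) * (inner ℝ x y : ℝ) ≤ (inner ℝ x x : ℝ) * (inner ℝ y y : ℝ) :=
      real_inner_mul_inner_self_le x y
    rw [real_inner_self_eq_norm_sq x, real_inner_self_eq_norm_sq y] at hp
    set p : ℝ := (inner ℝ x y : ℝ) with hpdef
    have hsub : (0 : ℝ) < ‖x - y‖ ^ 2 := by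
      have := sub_ne_zero.mpr hxy
      have h := norm_pos_iff.mpr this
      positivity
    have hns : ‖x - y‖ ^ 2 = ‖x‖ ^ 2 - 2 * p + ‖y‖ ^ 2 := by
      rw [hpdef, norm_sub_sq_real]
    have hkey : 1 + p < sx * sy := by
      have h1 : (1 + p) ^ 2 < (1 + ‖x‖ ^ 2) * (1 + ‖y‖ ^ 2) := by nlinarith
      rcases lt_or_ge (1 + p) 0 with h | h
      · exact lt_of_lt_of_le h (by positivity)
      · have h2 : 1 + p < Real.sqrt ((1 + ‖x‖ ^ 2) * (1 + ‖y‖ ^ 2)) := (Real.lt_sqrt h).mpr h1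
        rwa [Real.sqrt_mul hAx.le] at h2
    have hwn : ‖w‖ ^ 2 = a ^ 2 * ‖x‖ ^ 2 + 2 * (a * b) * p + b ^ 2 * ‖y‖ ^ 2 := by
      have : ‖w‖ ^ 2 = ‖a • x‖ ^ 2 + 2 * (inner ℝ (a • x) (b • y) : ℝ) + ‖b • y‖ ^ 2 :=
        norm_add_sq_real (a • x) (b • y)
      rw [this, norm_smul, norm_smul, real_inner_smul_left, real_inner_smul_right,
        Real.norm_eq_abs, Real.norm_eq_abs, abs_of_pos ha, abs_of_pos hb, ← hpdef]
      ring
    have hstep1 : Real.sqrt (1 + ‖w‖ ^ 2) < a * sx + b * sy := by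
      rw [Real.sqrt_lt' (by positivity)]
      have hone : (1 : ℝ) = a ^ 2 + 2 * (a * b) + b ^ 2 := by nlinarith
      nlinarith [mul_pos (mul_pos ha hb) (sub_pos.mpr hkey)]
    -- rewrite rpow in terms of sqrt
    have hrw : ∀ u : ℝ, 0 ≤ u → u ^ (δ / 2) = Real.sqrt u ^ δ := by
      intro u hu
      rw [Real.sqrt_eq_rpow, ← Real.rpow_mul hu]
      congr 1
      ring
    have h2 : (1 + ‖w‖ ^ 2) ^ (δ / 2) < (a * sx + b * sy) ^ δ := by
      rw [hrw _ hAw.le]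
      exact Real.rpow_lt_rpow (Real.sqrt_nonneg _) hstep1 hδ0
    have h3 : (a * sx + b * sy) ^ δ ≤ a * sx ^ δ + b * sy ^ δ := by
      have := (convexOn_rpow hδ1).2 (Set.mem_Ici.mpr hsx.le) (Set.mem_Ici.mpr hsy.le)
        ha.le hb.le hab
      simpa using this
    have hx' : (1 + ‖x‖ ^ 2) ^ (δ / 2) = sx ^ δ := hrw _ hAx.le
    have hy' : (1 + ‖y‖ ^ 2) ^ (δ / 2) = sy ^ δ := hrw _ hAy.le
    rw [smul_eq_mul, smul_eq_mul, hV x, hV y, hV w, hx', hy']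
    linarith
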